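/- For every nonzero column vector v ∈ K², there exist γ ∈ Γ₁(t) and λ ∈ K^× such that γv = λ·(1,0)ᵀ or γv = λ·(0,1)ᵀ. Moreover, there exist no γ ∈ Γ₁(t) and λ ∈ K^× with γ·(1,0)ᵀ = λ·(0,1)ᵀ. In other words, the set of cusps of Γ₁(t) consists of exactly the two classes of ∞ = (1:0) and 0 = (0:1). -/

import Mathlib

open Polynomial Matrix

/-- `Γ₁(𝔫)` as a set of 2×2 matrices over `A = F[t]`:
matrices of determinant 1 congruent to `[[1,*],[0,1]]` mod `𝔫`. -/
def Gamma1 (F : Type*) [Field F] (n : Polynomial F) :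
    Set (Matrix (Fin 2) (Fin 2) (Polynomial F)) :=
  {γ | γ.det = 1 ∧ n ∣ γ 1 0 ∧ n ∣ (γ 0 0 - 1) ∧ n ∣ (γ 1 1 - 1)}

private lemma mulVec2 {R : Type*} [CommRing R] (M : Matrix (Fin 2) (Fin 2) R)
    (w : Fin 2 → R) (i : Fin 2) :
    (M.mulVec w) i = M i 0 * w 0 + M i 1 * w 1 := by
  simp [Matrix.mulVec, dotProduct, Fin.sum_univ_two]

private lemma X_dvd_iff_eval {F : Type*} [Field F] (p : Polynomial F) :
    X ∣ p ↔ p.eval 0 = 0 := by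
  rw [Polynomial.X_dvd_iff, Polynomial.coeff_zero_eq_eval_zero]

private lemma gamma1_mul {F : Type*} [Field F]
    {γ δ : Matrix (Fin 2) (Fin 2) (Polynomial F)}
    (hγ : γ ∈ Gamma1 F X) (hδ : δ ∈ Gamma1 F X) : γ * δ ∈ Gamma1 F X := by
  obtain ⟨h1, h2, h3, h4⟩ := hγ
  obtain ⟨k1, k2, k3, k4⟩ := hδ
  have hma : ∀ i j, (γ * δ) i j = γ i 0 * δ 0 j + γ i 1 * δ 1 j := by
    intro i j; simp [Matrix.mul_apply, Fin.sum_univ_two]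
  refine ⟨by rw [Matrix.det_mul, h1, k1, one_mul], ?_, ?_, ?_⟩
  · rw [hma]; exact dvd_add (h2.mul_right _) (k2.mul_left _)
  · rw [hma]
    have he : γ 0 0 * δ 0 0 + γ 0 1 * δ 1 0 - 1
        = (γ 0 0 - 1) * δ 0 0 + (δ 0 0 - 1) + γ 0 1 * δ 1 0 := by ring
    rw [he]
    exact dvd_add (dvd_add (h3.mul_right _) k3) (k2.mul_left _)
  · rw [hma]
    have he : γ 1 0 * δ 0 1 + γ 1 1 * δ 1 1 - 1
        = γ 1 0 * δ 0 1 + (γ 1 1 - 1) * δ 1 1 + (δ 1 1 - 1) := by ring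
    rw [he]
    exact dvd_add (dvd_add (h2.mul_right _) (h4.mul_right _)) k4

private lemma toInfty {F : Type*} [Field F] (a b x y : Polynomial F)
    (hxy : x * a + y * b = 1) (hb : b.eval 0 = 0) :
    ∃ γ ∈ Gamma1 F X, ∃ c : Polynomial F, c ≠ 0 ∧ γ.mulVec ![a, b] = ![c, 0] := by
  have ha0 : a.eval 0 ≠ 0 := by
    intro h
    have h2 := congrArg (Polynomial.eval 0) hxy
    simp [h, hb] at h2
  set u := a.eval 0 with hu
  have hC : (C u) * (C u⁻¹) = 1 := by rw [← C_mul, mul_inv_cancel₀ ha0, C_1]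
  have hx0 : x.eval 0 * u = 1 := by
    have h2 := congrArg (Polynomial.eval 0) hxy
    simpa [hb] using h2
  refine ⟨!![C u * x, C u * y; -(C u⁻¹ * b), C u⁻¹ * a], ⟨?_, ?_, ?_, ?_⟩, C u,
    Polynomial.C_ne_zero.mpr ha0, ?_⟩
  · rw [Matrix.det_fin_two_of]
    linear_combination (C u * C u⁻¹) * hxy + hC
  · rw [X_dvd_iff_eval]; simp [hb]
  · rw [X_dvd_iff_eval]; simp
    linear_combination hx0
  · rw [X_dvd_iff_eval]; simp
    linear_combination inv_mul_cancel₀ ha0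
  · funext i
    fin_cases i <;> rw [mulVec2] <;> simp
    · linear_combination C u * hxy
    · ring

private lemma toZero {F : Type*} [Field F] (a b x y : Polynomial F)
    (hxy : x * b + y * a = 1) (ha : a.eval 0 = 0) :
    ∃ γ ∈ Gamma1 F X, ∃ c : Polynomial F, c ≠ 0 ∧ γ.mulVec ![a, b] = ![0, c] := by
  have hb0 : b.eval 0 ≠ 0 := by
    intro h
    have h2 := congrArg (Polynomial.eval 0) hxy
    simp [h, ha] at h2
  set u := b.eval 0 with hu
  have hC : (C u) * (C u⁻¹) = 1 := by rw [← C_mul, mul_inv_cancel₀ hb0, C_1]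
  set x₂ : Polynomial F := x + C (y.eval 0 * u⁻¹) * a with hx₂
  set y₂ : Polynomial F := y - C (y.eval 0 * u⁻¹) * b with hy₂
  have hxy2 : x₂ * b + y₂ * a = 1 := by rw [hx₂, hy₂]; linear_combination hxy
  have hy20 : y₂.eval 0 = 0 := by
    rw [hy₂]; simp [hu]
    field_simp
    rw [div_self (show b.eval 0 ≠ 0 from hb0), sub_self, mul_zero]
  have hx20 : x₂.eval 0 * u = 1 := by
    have h2 := congrArg (Polynomial.eval 0) hxy2
    simpa [ha] using h2
  refine ⟨!![C u⁻¹ * b, -(C u⁻¹ * a); C u * y₂, C u * x₂], ⟨?_, ?_, ?_, ?_⟩, C u,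
    Polynomial.C_ne_zero.mpr hb0, ?_⟩
  · rw [Matrix.det_fin_two_of]
    linear_combination (C u * C u⁻¹) * hxy2 + hC
  · rw [X_dvd_iff_eval]; simp [hy20]
  · rw [X_dvd_iff_eval]; simp
    linear_combination inv_mul_cancel₀ hb0
  · rw [X_dvd_iff_eval]; simp
    linear_combination hx20
  · funext i
    fin_cases i <;> rw [mulVec2] <;> simp
    · ring
    · linear_combination C u * hxy2

private lemma key {F : Type*} [Field F] (a b : Polynomial F) (h : IsCoprime a b) :
    ∃ γ ∈ Gamma1 F X, ∃ c : Polynomial F, c ≠ 0 ∧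
      (γ.mulVec ![a, b] = ![c, 0] ∨ γ.mulVec ![a, b] = ![0, c]) := by
  obtain ⟨x, y, hxy⟩ := h
  by_cases hb : b.eval 0 = 0
  · obtain ⟨γ, hγ, c, hc, heq⟩ := toInfty a b x y hxy hb
    exact ⟨γ, hγ, c, hc, Or.inl heq⟩
  · set m : Polynomial F := C (-(a.eval 0) * (b.eval 0)⁻¹) with hm
    set a' : Polynomial F := a + m * b with ha'
    have ha'0 : a'.eval 0 = 0 := by
      rw [ha', hm]; simp
      field_simp
      ring
    have hxy' : (y - x * m) * b + x * a' = 1 := by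
      rw [ha']; linear_combination hxy
    obtain ⟨γ', hγ', c, hc, heq⟩ := toZero a' b (y - x * m) x hxy' ha'0
    have hT : (!![1, m; 0, 1] : Matrix (Fin 2) (Fin 2) (Polynomial F)) ∈ Gamma1 F X := by
      refine ⟨by simp [Matrix.det_fin_two_of], ?_, ?_, ?_⟩ <;> simp
    refine ⟨γ' * !![1, m; 0, 1], gamma1_mul hγ' hT, c, hc, Or.inr ?_⟩
    have hTv : (!![1, m; 0, 1] : Matrix (Fin 2) (Fin 2) (Polynomial F)).mulVec ![a, b]
        = ![a', b] := by
      funext i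
      fin_cases i <;> rw [mulVec2] <;> simp [ha']
    rw [← Matrix.mulVec_mulVec, hTv, heq]

private lemma reduce {F : Type*} [Field F] (v : Fin 2 → RatFunc F) (hv : v ≠ 0) :
    ∃ (a b : Polynomial F) (s : RatFunc F), IsCoprime a b ∧ s ≠ 0 ∧
      v 0 = s * algebraMap (Polynomial F) (RatFunc F) a ∧
      v 1 = s * algebraMap (Polynomial F) (RatFunc F) b := by
  classical
  set f := algebraMap (Polynomial F) (RatFunc F) with hf
  by_cases h1 : v 1 = 0
  · have h0 : v 0 ≠ 0 := by
      intro h0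
      apply hv
      funext i; fin_cases i <;> assumption
    exact ⟨1, 0, v 0, isCoprime_one_left, h0, by simp, by simp [h1]⟩
  · set w0 : Polynomial F := (v 0).num * (v 1).denom with hw0
    set w1 : Polynomial F := (v 1).num * (v 0).denom with hw1
    have hw1ne : w1 ≠ 0 := mul_ne_zero (RatFunc.num_ne_zero h1) (RatFunc.denom_ne_zero _)
    set g : Polynomial F := EuclideanDomain.gcd w0 w1 with hg
    have hgne : g ≠ 0 := by
      intro h
      exact hw1ne (EuclideanDomain.gcd_eq_zero_iff.mp h).2
    set a : Polynomial F := w0 / g with hA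
    set b : Polynomial F := w1 / g with hB
    have hga : g * a = w0 :=
      EuclideanDomain.mul_div_cancel' hgne (EuclideanDomain.gcd_dvd_left _ _)
    have hgb : g * b = w1 :=
      EuclideanDomain.mul_div_cancel' hgne (EuclideanDomain.gcd_dvd_right _ _)
    have hbez := EuclideanDomain.gcd_eq_gcd_ab w0 w1
    have hone : g * 1 = g * (a * EuclideanDomain.gcdA w0 w1 + b * EuclideanDomain.gcdB w0 w1) := by
      rw [mul_one]
      calc g = w0 * EuclideanDomain.gcdA w0 w1 + w1 * EuclideanDomain.gcdB w0 w1 := hbez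
        _ = g * (a * EuclideanDomain.gcdA w0 w1 + b * EuclideanDomain.gcdB w0 w1) := by
            rw [← hga, ← hgb]; ring
    have hone' : a * EuclideanDomain.gcdA w0 w1 + b * EuclideanDomain.gcdB w0 w1 = 1 :=
      (mul_left_cancel₀ hgne hone).symm
    have hcop : IsCoprime a b :=
      ⟨EuclideanDomain.gcdA w0 w1, EuclideanDomain.gcdB w0 w1, by linear_combination hone'⟩
    have hd0 : f (v 0).denom ≠ 0 := RatFunc.algebraMap_ne_zero (RatFunc.denom_ne_zero _)
    have hd1 : f (v 1).denom ≠ 0 := RatFunc.algebraMap_ne_zero (RatFunc.denom_ne_zero _)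
    have e0 : v 0 * f (v 0).denom = f (v 0).num :=
      ((div_eq_iff hd0).mp (RatFunc.num_div_denom (v 0))).symm
    have e1 : v 1 * f (v 1).denom = f (v 1).num :=
      ((div_eq_iff hd1).mp (RatFunc.num_div_denom (v 1))).symm
    set d : Polynomial F := (v 0).denom * (v 1).denom with hd
    have hdne : f d ≠ 0 := by rw [hd, _root_.map_mul]; exact mul_ne_zero hd0 hd1
    refine ⟨a, b, f g / f d, hcop, div_ne_zero (RatFunc.algebraMap_ne_zero hgne) hdne,
      ?_, ?_⟩
    · rw [div_mul_eq_mul_div, eq_div_iff hdne, ← _root_.map_mul, hd]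
      calc v 0 * f ((v 0).denom * (v 1).denom)
          = (v 0 * f (v 0).denom) * f (v 1).denom := by rw [_root_.map_mul]; ring
        _ = f ((v 0).num * (v 1).denom) := by rw [e0, _root_.map_mul]
        _ = f (g * a) := by rw [hga]
    · rw [div_mul_eq_mul_div, eq_div_iff hdne, ← _root_.map_mul, hd]
      calc v 1 * f ((v 0).denom * (v 1).denom)
          = (v 1 * f (v 1).denom) * f (v 0).denom := by rw [_root_.map_mul]; ring
        _ = f ((v 1).num * (v 0).denom) := by rw [e1, _root_.map_mul]
        _ = f (g * b) := by rw [hgb]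

theorem stmt2 (p : ℕ) (hp : p.Prime) (F : Type*) [Field F] [Fintype F] [CharP F p] :
    (∀ v : Fin 2 → RatFunc F, v ≠ 0 →
      ∃ γ ∈ Gamma1 F (X : Polynomial F), ∃ l : RatFunc F, l ≠ 0 ∧
        ((γ.map (algebraMap (Polynomial F) (RatFunc F))).mulVec v = ![l, 0] ∨
         (γ.map (algebraMap (Polynomial F) (RatFunc F))).mulVec v = ![0, l])) ∧
    ¬ (∃ γ ∈ Gamma1 F (X : Polynomial F), ∃ l : RatFunc F, l ≠ 0 ∧
        (γ.map (algebraMap (Polynomial F) (RatFunc F))).mulVec (![1, 0] : Fin 2 → RatFunc F)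
          = ![0, l]) := by
  constructor
  · intro v hv
    obtain ⟨a, b, s, hcop, hs, hv0, hv1⟩ := reduce v hv
    obtain ⟨γ, hγ, c, hc, hcase⟩ := key a b hcop
    refine ⟨γ, hγ, s * algebraMap (Polynomial F) (RatFunc F) c,
      mul_ne_zero hs (RatFunc.algebraMap_ne_zero hc), ?_⟩
    rcases hcase with heq | heq
    · left
      have h0 := congrFun heq 0
      have h1 := congrFun heq 1
      rw [mulVec2] at h0 h1
      simp at h0 h1
      have fh0 := congrArg (algebraMap (Polynomial F) (RatFunc F)) h0
      have fh1 := congrArg (algebraMap (Polynomial F) (RatFunc F)) h1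
      simp only [map_add, _root_.map_mul, map_zero] at fh0 fh1
      funext i
      fin_cases i <;> rw [mulVec2] <;> simp [Matrix.map_apply, hv0, hv1]
      · linear_combination s * fh0
      · linear_combination s * fh1
    · right
      have h0 := congrFun heq 0
      have h1 := congrFun heq 1
      rw [mulVec2] at h0 h1
      simp at h0 h1
      have fh0 := congrArg (algebraMap (Polynomial F) (RatFunc F)) h0
      have fh1 := congrArg (algebraMap (Polynomial F) (RatFunc F)) h1
      simp only [map_add, _root_.map_mul, map_zero] at fh0 fh1
      funext i
      fin_cases i <;> rw [mulVec2] <;> simp [Matrix.map_apply, hv0, hv1]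
      · linear_combination s * fh0
      · linear_combination s * fh1
  · rintro ⟨γ, ⟨hdet, h10, h00, h11⟩, l, hl, heq⟩
    have h0 := congrFun heq 0
    rw [mulVec2] at h0
    simp [Matrix.map_apply] at h0
    have hz : γ 0 0 = 0 := RatFunc.algebraMap_injective F (by simpa using h0)
    rw [hz] at h00
    rw [X_dvd_iff_eval] at h00
    simp at h00
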